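/- Let S be a small category, A : S → Type a copresheaf, and X : S → Type another copresheaf. Then the functor X ↦ Λ(A ∘ π_X) (where π_X : ∫X → S is the category-of-elements projection and Λ(D) = colim(yoneda ∘ D^op) for D : J → Type, with yoneda : Type^op → [Type,Type], N ↦ (−)^N) is left adjoint to the precomposition functor M ↦ M ∘ A from [Type, Type] to [S, Type]; hence Λ(A ∘ π_X) ≅ Lan_A X. -/

import Mathlib

open CategoryTheory CategoryTheory.Limits Opposite

universe u

namespace Stmt17Aux

variable {S : Type u} [SmallCategory S] (A : S ⥤ Type u)

/-- The diagram Λ is a colimit of. -/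
abbrev Dg (X : S ⥤ Type u) : (X.Elements)ᵒᵖ ⥤ Type u ⥤ Type u :=
  (CategoryOfElements.π X ⋙ A).op ⋙ coyoneda

noncomputable def fwd (X : S ⥤ Type u) (M : Type u ⥤ Type u) (f : colimit (Dg A X) ⟶ M) :
    X ⟶ A ⋙ M where
  app s := TypeCat.ofHom fun x => coyonedaEquiv (X := A.obj s) (F := M)
    (colimit.ι (Dg A X) (op (X.elementsMk s x)) ≫ f)
  naturality := by
    intro s s' u
    ext x
    have hcoc := colimit.w (Dg A X)
      (CategoryOfElements.homMk (X.elementsMk s x) (X.elementsMk s' (X.map u x)) u rfl).op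
    show coyonedaEquiv (colimit.ι (Dg A X) (op (X.elementsMk s' (X.map u x))) ≫ f)
      = M.map (A.map u) (coyonedaEquiv (colimit.ι (Dg A X) (op (X.elementsMk s x)) ≫ f))
    rw [← hcoc, Category.assoc, coyonedaEquiv_naturality]
    rfl

noncomputable def cocone (X : S ⥤ Type u) (M : Type u ⥤ Type u) (η : X ⟶ A ⋙ M) :
    Cocone (Dg A X) where
  pt := M
  ι :=
    { app := fun j => coyonedaEquiv.symm (η.app j.unop.1 j.unop.2)
      naturality := by
        intro j j' g
        dsimp
        rw [Category.comp_id]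
        rw [← coyonedaEquiv_symm_map (F := M) (A.map ((CategoryOfElements.π X).map g.unop)) (η.app j'.unop.1 j'.unop.2)]
        have h2 := ConcreteCategory.congr_hom (η.naturality g.unop.val) j'.unop.2
        dsimp at h2
        erw [← h2, g.unop.property] }

noncomputable def bwd (X : S ⥤ Type u) (M : Type u ⥤ Type u) (η : X ⟶ A ⋙ M) :
    colimit (Dg A X) ⟶ M :=
  colimit.desc (Dg A X) (cocone A X M η)

/-- The hom-equivalence `Hom(Λ(A ∘ π_X), M) ≃ Hom(X, M ∘ A)`. -/
noncomputable def homEquiv (X : S ⥤ Type u) (M : Type u ⥤ Type u) :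
    (colimit (Dg A X) ⟶ M) ≃ (X ⟶ ((Functor.whiskeringLeft S (Type u) (Type u)).obj A).obj M) where
  toFun := fwd A X M
  invFun := bwd A X M
  left_inv f := by
    apply colimit.hom_ext
    intro j
    erw [bwd, colimit.ι_desc]
    exact coyonedaEquiv.symm_apply_apply (colimit.ι (Dg A X) j ≫ f)
  right_inv η := by
    ext s x
    show coyonedaEquiv (X := A.obj s) (F := M)
      (colimit.ι (Dg A X) (op (X.elementsMk s x)) ≫ bwd A X M η) = η.app s x
    erw [bwd, colimit.ι_desc]
    exact (coyonedaEquiv (X := A.obj s) (F := M)).apply_symm_apply (η.app s x)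

theorem he (X : S ⥤ Type u) (M M' : Type u ⥤ Type u) (g : M ⟶ M')
    (h : colimit (Dg A X) ⟶ M) :
    homEquiv A X M' (h ≫ g) =
      homEquiv A X M h ≫ ((Functor.whiskeringLeft S (Type u) (Type u)).obj A).map g := by
  ext s x
  show coyonedaEquiv (X := A.obj s) (F := M')
      (colimit.ι (Dg A X) (op (X.elementsMk s x)) ≫ h ≫ g)
    = g.app (A.obj s) (coyonedaEquiv (X := A.obj s) (F := M)
      (colimit.ι (Dg A X) (op (X.elementsMk s x)) ≫ h))
  erw [← Category.assoc, coyonedaEquiv_comp]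

end Stmt17Aux

theorem stmt17 {S : Type u} [SmallCategory S] (A : S ⥤ Type u) :
    ∃ L : (S ⥤ Type u) ⥤ (Type u ⥤ Type u),
      (∀ X : S ⥤ Type u,
        Nonempty (L.obj X ≅ colimit ((CategoryOfElements.π X ⋙ A).op ⋙ coyoneda))) ∧
      Nonempty (L ⊣ (Functor.whiskeringLeft S (Type u) (Type u)).obj A) := by
  refine ⟨Adjunction.leftAdjointOfEquiv (Stmt17Aux.homEquiv A) (Stmt17Aux.he A),
    fun X => ⟨Iso.refl _⟩, ⟨Adjunction.adjunctionOfEquivLeft _ _⟩⟩
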